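/- arXiv:1511.06473 — 2 statements merged into one kernel-verified Lean document; each statement's English description precedes it below -/
import Mathlib

section
/- Let S be a generalized Krull domain of Krull dimension greater than 1 such that the set consisting of the units of S together with 0 forms a subfield k of S. Let J be a principal height-one prime ideal of S that is not a maximal ideal of S, and suppose every unit of S/J lies in the image of k in S/J. If R is the pullback of the diagram k → S/J ← S, i.e., R = k + J = {s ∈ S : s + J ∈ image of k}, then R is a perinormal integral domain. -/
/-- A ring homomorphism `f : A →+* B` satisfies going-down: whenever `p₁ ⊆ p₂` are primes of `A`
and `Q₂` is a prime of `B` contracting to `p₂`, there is a prime `Q₁ ⊆ Q₂` of `B`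
contracting to `p₁`. -/
def GoingDownHom {A B : Type*} [CommRing A] [CommRing B] (f : A →+* B) : Prop :=
  ∀ (p₁ p₂ : Ideal A), p₁.IsPrime → p₂.IsPrime → p₁ ≤ p₂ →
    ∀ Q₂ : Ideal B, Q₂.IsPrime → Q₂.comap f = p₂ →
      ∃ Q₁ : Ideal B, Q₁.IsPrime ∧ Q₁ ≤ Q₂ ∧ Q₁.comap f = p₁

/-- The canonical map from the localization of a subring `A ⊆ B` at a submonoid `W ⊆ A`
to the localization of `B` at the image of `W` in `B`. -/
noncomputable def locMap {B : Type*} [CommRing B] (A : Subring B) (W : Submonoid A) :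
    Localization W →+* Localization (W.map A.subtype) :=
  IsLocalization.lift (M := W) (S := Localization W)
    (g := (algebraMap B (Localization (W.map A.subtype))).comp A.subtype)
    (fun y => IsLocalization.map_units (M := W.map A.subtype) (Localization (W.map A.subtype))
      ⟨A.subtype y, ⟨y, y.2, rfl⟩⟩)

/-- A subring `A ⊆ B` is perinormal in `B` at the prime `p` of `A`:  the localization `A_p`
(i.e. the image of `Localization.AtPrime p` in `B_{A∖p}`) is the only local ring `T` between
`A_p` and `B_{A∖p}` whose maximal ideal contracts to `pA_p` and which satisfies going-down
over `A_p`. -/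
def PeriAt {B : Type*} [CommRing B] (A : Subring B) (p : Ideal A) (hp : p.IsPrime) : Prop :=
  haveI := hp
  ∀ (T : Subring (Localization (p.primeCompl.map A.subtype)))
    (hT : (locMap A p.primeCompl).range ≤ T),
    IsLocalRing T →
    (∀ M : Ideal T, M.IsMaximal →
      M.comap ((locMap A p.primeCompl).codRestrict T (fun x => hT ⟨x, rfl⟩)) =
        IsLocalRing.maximalIdeal (Localization.AtPrime p)) →
    GoingDownHom ((locMap A p.primeCompl).codRestrict T (fun x => hT ⟨x, rfl⟩)) →
    T = (locMap A p.primeCompl).range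

/-- A subring `A` of `B` is perinormal in `B`. -/
def PerinormalIn {B : Type*} [CommRing B] (A : Subring B) : Prop :=
  ∀ (p : Ideal A) (hp : p.IsPrime), PeriAt A p hp

/-- An integral domain `R` is perinormal:  every local overring of `R`
(local ring between `R` and its fraction field) satisfying going-down over `R`
is a localization of `R` at a prime ideal. -/
def PerinormalDomain (R : Type*) [CommRing R] [IsDomain R] : Prop :=
  ∀ (T : Subring (FractionRing R)) (hT : (algebraMap R (FractionRing R)).range ≤ T),
    IsLocalRing T →
    GoingDownHom ((algebraMap R (FractionRing R)).codRestrict T (fun x => hT ⟨x, rfl⟩)) →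
    ∃ p : Ideal R, p.IsPrime ∧
      (T : Set (FractionRing R)) =
        {x | ∃ r s : R, s ∉ p ∧
          x * algebraMap R (FractionRing R) s = algebraMap R (FractionRing R) r}

/-- A subring `A ⊆ B` is apparently fragile in `B`: for every ring `C` with `A ⊊ C ⊆ B`
there are a minimal prime `p` of `A` and distinct primes `P, Q` of `C` contracting to `p`. -/
def ApparentlyFragile {B : Type*} [CommRing B] (A : Subring B) : Prop :=
  ∀ (C : Subring B) (hAC : A ≤ C), A ≠ C →
    ∃ p ∈ minimalPrimes A, ∃ P Q : Ideal C, P.IsPrime ∧ Q.IsPrime ∧ P ≠ Q ∧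
      P.comap (Subring.inclusion hAC) = p ∧ Q.comap (Subring.inclusion hAC) = p

/-- A subring `A ⊆ B` is fragile in `B`: for every prime `P` of `A`, the extension
`A_P ⊆ B_{A∖P}` is apparently fragile. -/
def Fragile {B : Type*} [CommRing B] (A : Subring B) : Prop :=
  ∀ (P : Ideal A) (hP : P.IsPrime),
    haveI := hP
    ApparentlyFragile (locMap A P.primeCompl).range

/-- A subring `A ⊆ B` is globally fragile in `B`: for every multiplicative subset `W` of `A`,
the extension `A_W ⊆ B_W` is apparently fragile. -/
def GloballyFragile {B : Type*} [CommRing B] (A : Subring B) : Prop :=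
  ∀ W : Submonoid A, ApparentlyFragile (locMap A W).range

/-- An integral domain `S` is a generalized Krull domain: (i) `S` is the intersection of its
localizations at height-one primes (inside its fraction field), (ii) every nonzero element lies
in only finitely many height-one primes, and (iii) the localization at every height-one prime
is a valuation ring. -/
def IsGenKrull (S : Type*) [CommRing S] [IsDomain S] : Prop :=
  (∀ x : FractionRing S,
      (∀ (p : Ideal S) (hp : p.IsPrime), Order.height (⟨p, hp⟩ : PrimeSpectrum S) = 1 →
        ∃ a s : S, s ∉ p ∧ x * algebraMap S (FractionRing S) s = algebraMap S (FractionRing S) a) →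
      ∃ r : S, algebraMap S (FractionRing S) r = x) ∧
  (∀ s : S, s ≠ 0 →
      {p : Ideal S | ∃ hp : p.IsPrime, Order.height (⟨p, hp⟩ : PrimeSpectrum S) = 1 ∧ s ∈ p}.Finite) ∧
  (∀ (p : Ideal S) (hp : p.IsPrime), Order.height (⟨p, hp⟩ : PrimeSpectrum S) = 1 →
      haveI := hp
      ValuationRing (Localization.AtPrime p))

/-- A prime ideal `Q` has height one. -/
def HeightOne {S : Type*} [CommRing S] (Q : Ideal S) : Prop :=
  ∃ hQ : Q.IsPrime, Order.height (⟨Q, hQ⟩ : PrimeSpectrum S) = 1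


set_option linter.unusedSectionVars false
set_option linter.unusedVariables false
set_option maxHeartbeats 2000000
set_option synthInstance.maxHeartbeats 400000

section MyAuxiliaryHelpers

variable {S : Type*} [CommRing S] [IsDomain S] {K : Type*} [Field K]

def MemLoc (φ : S →+* K) (q : Ideal S) (x : K) : Prop :=
  ∃ a s : S, s ∉ q ∧ x * φ s = φ a

lemma memLoc_zero (φ : S →+* K) {q : Ideal S} (hq : q.IsPrime) : MemLoc φ q 0 :=
  ⟨0, 1, (Ideal.ne_top_iff_one q).mp hq.ne_top, by simp⟩

lemma phi_ne_zero (φ : S →+* K) (hφ : Function.Injective φ) {s : S} (hs : s ≠ 0) : φ s ≠ 0 :=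
  fun h => hs (hφ (h.trans (map_zero φ).symm))

lemma aux_dvd_total (t : Ideal S) (ht : t.IsPrime)
    (hv : ValuationRing (Localization.AtPrime t)) (z z' : S) :
    ∃ s d : S, s ∉ t ∧ (z * s = z' * d ∨ z' * s = z * d) := by
  haveI := ht
  haveI := hv
  set L := Localization.AtPrime t with hL
  obtain ⟨c, hc⟩ := ValuationRing.cond (algebraMap S L z) (algebraMap S L z')
  obtain ⟨e, d, hed⟩ : ∃ (e : S) (d : t.primeCompl), IsLocalization.mk' L e d = c :=
    ⟨(IsLocalization.mk'_surjective t.primeCompl c).choose.1, _,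
      (IsLocalization.mk'_surjective t.primeCompl c).choose_spec⟩
  rcases hc with hc | hc
  · have h1 : algebraMap S L (z * e) = algebraMap S L (z' * ↑d) := by
      rw [map_mul, map_mul]
      calc algebraMap S L z * algebraMap S L e
          = algebraMap S L z * (IsLocalization.mk' L e d * algebraMap S L ↑d) := by
            rw [IsLocalization.mk'_spec]
        _ = (algebraMap S L z * IsLocalization.mk' L e d) * algebraMap S L ↑d := by ring
        _ = algebraMap S L z' * algebraMap S L ↑d := by rw [hed, hc]
    obtain ⟨u, hu⟩ := (IsLocalization.eq_iff_exists t.primeCompl L).mp h1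
    exact ⟨↑d * ↑u, e * ↑u, t.primeCompl.mul_mem d.2 u.2, Or.inr (by linear_combination -hu)⟩
  · have h1 : algebraMap S L (z' * e) = algebraMap S L (z * ↑d) := by
      rw [map_mul, map_mul]
      calc algebraMap S L z' * algebraMap S L e
          = algebraMap S L z' * (IsLocalization.mk' L e d * algebraMap S L ↑d) := by
            rw [IsLocalization.mk'_spec]
        _ = (algebraMap S L z' * IsLocalization.mk' L e d) * algebraMap S L ↑d := by ring
        _ = algebraMap S L z * algebraMap S L ↑d := by rw [hed, hc]
    obtain ⟨u, hu⟩ := (IsLocalization.eq_iff_exists t.primeCompl L).mp h1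
    exact ⟨↑d * ↑u, e * ↑u, t.primeCompl.mul_mem d.2 u.2, Or.inl (by linear_combination -hu)⟩

lemma aux_arch (t : Ideal S) (ht : t.IsPrime)
    (hdim1 : ∀ q : Ideal S, q.IsPrime → q < t → q = ⊥)
    (hdvd : ∀ z z' : S, ∃ s d : S, s ∉ t ∧ (z * s = z' * d ∨ z' * s = z * d))
    {c b : S} (hc : c ∈ t) (hc0 : c ≠ 0) (hb : b ≠ 0) :
    ∃ (N : ℕ) (s d : S), s ∉ t ∧ c ^ N * s = b * d := by
  by_contra hcon
  push_neg at hcon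
  -- hcon : ∀ N s d, s ∉ t → c ^ N * s ≠ b * d
  set P : Set S := {z | ∀ (N : ℕ) (s d : S), s ∉ t → c ^ N * s ≠ z * d} with hP
  have h1t : (1 : S) ∉ t := (Ideal.ne_top_iff_one t).mp ht.ne_top
  have hzero : (0 : S) ∈ P := by
    intro N s d hs h
    rw [zero_mul] at h
    rcases mul_eq_zero.mp h with h' | h'
    · exact hc0 (pow_eq_zero_iff'.mp h').1
    · exact hs (h' ▸ t.zero_mem)
  have haddP : ∀ z z', z ∈ P → z' ∈ P → z + z' ∈ P := by
    intro z z' hz hz'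
    obtain ⟨s₀, d₀, hs₀, hor⟩ := hdvd z z'
    rcases hor with h | h
    · -- z * s₀ = z' * d₀  :  z' divides z
      intro N s d hs hE
      -- c^N * s = (z + z') * d ⇒ multiply by s₀:
      -- c^N * (s*s₀) = (z*s₀ + z'*s₀)*d = (z'*d₀ + z'*s₀)*d = z' * ((d₀+s₀)*d)
      refine hz' N (s * s₀) ((d₀ + s₀) * d) (fun hmem => (ht.mem_or_mem hmem).elim hs hs₀) ?_
      calc c ^ N * (s * s₀) = (c ^ N * s) * s₀ := by ring
        _ = (z + z') * d * s₀ := by rw [hE]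
        _ = (z * s₀) * d + z' * s₀ * d := by ring
        _ = (z' * d₀) * d + z' * s₀ * d := by rw [h]
        _ = z' * ((d₀ + s₀) * d) := by ring
    · intro N s d hs hE
      refine hz N (s * s₀) ((d₀ + s₀) * d) (fun hmem => (ht.mem_or_mem hmem).elim hs hs₀) ?_
      calc c ^ N * (s * s₀) = (c ^ N * s) * s₀ := by ring
        _ = (z + z') * d * s₀ := by rw [hE]
        _ = (z' * s₀) * d + z * s₀ * d := by ring
        _ = (z * d₀) * d + z * s₀ * d := by rw [h]
        _ = z * ((d₀ + s₀) * d) := by ring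
  set Q : Ideal S :=
    { carrier := P
      add_mem' := fun {z} {z'} hz hz' => haddP z z' hz hz'
      zero_mem' := hzero
      smul_mem' := by
        intro r z hz N s d hs hE
        exact hz N s (r * d) hs (by rw [hE, smul_eq_mul]; ring) } with hQ
  have hQt : Q ≤ t := by
    intro z hz
    by_contra hzt
    exact hz 0 z 1 hzt (by ring)
  have hcQ : c ∉ Q := fun h => h 1 1 1 h1t (by ring)
  have hQprime : Q.IsPrime := by
    constructor
    · intro htop
      have : (1 : S) ∈ Q := htop ▸ Submodule.mem_top
      exact this 1 1 c h1t (by ring)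
    · intro z z' hzz'
      by_contra hcontra
      push_neg at hcontra
      obtain ⟨hz, hz'⟩ := hcontra
      simp only [hQ, Submodule.mem_mk, AddSubmonoid.mem_mk, AddSubsemigroup.mem_mk,
        Set.mem_setOf_eq, hP, not_forall] at hz hz'
      obtain ⟨N, s, d, hs, hE⟩ := hz
      obtain ⟨N', s', d', hs', hE'⟩ := hz'
      rw [not_not] at hE hE'
      refine hzz' (N + N') (s * s') (d * d')
        (fun hmem => (ht.mem_or_mem hmem).elim hs hs') ?_
      calc c ^ (N + N') * (s * s') = (c ^ N * s) * (c ^ N' * s') := by rw [pow_add]; ring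
        _ = (z * d) * (z' * d') := by rw [hE, hE']
        _ = z * z' * (d * d') := by ring
  have hQbot : Q = ⊥ := by
    rcases lt_or_eq_of_le hQt with h | h
    · exact hdim1 Q hQprime h
    · exact absurd (h ▸ hc) hcQ
  have hbQ : b ∈ Q := fun N s d hs hE => hcon N s d hs hE
  rw [hQbot] at hbQ
  exact hb (by simpa using hbQ)

lemma aux_valK (φ : S →+* K) (hφ : Function.Injective φ) (t : Ideal S) (ht : t.IsPrime)
    (hdvd : ∀ z z' : S, ∃ s d : S, s ∉ t ∧ (z * s = z' * d ∨ z' * s = z * d))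
    (hrep : ∀ x : K, ∃ a b : S, b ≠ 0 ∧ x * φ b = φ a) (x : K) :
    MemLoc φ t x ∨ MemLoc φ t x⁻¹ := by
  obtain ⟨a, b, hb, hab⟩ := hrep x
  by_cases ha : a = 0
  · left
    have hx0 : x = 0 := by
      have : x * φ b = 0 := by rw [hab, ha, map_zero]
      rcases mul_eq_zero.mp this with h | h
      · exact h
      · exact absurd h (phi_ne_zero φ hφ hb)
    rw [hx0]; exact memLoc_zero φ ht
  · have hx0 : x ≠ 0 := by
      intro h
      rw [h, zero_mul] at hab
      exact phi_ne_zero φ hφ ha hab.symm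
    obtain ⟨s, d, hs, hor⟩ := hdvd a b
    rcases hor with h | h
    ·
      -- a*s = b*d means  (a/b) * s = d, i.e. x * φ s = φ d
      left
      refine ⟨d, s, hs, ?_⟩
      have : (x * φ s) * φ b = φ d * φ b := by
        calc (x * φ s) * φ b = (x * φ b) * φ s := by ring
          _ = φ a * φ s := by rw [hab]
          _ = φ (a * s) := by rw [map_mul]
          _ = φ (b * d) := by rw [h]
          _ = φ d * φ b := by rw [map_mul]; ring
      exact mul_right_cancel₀ (phi_ne_zero φ hφ hb) this
    · -- b * s = a * d  :  x⁻¹ = b/a :  x⁻¹ * φ s = φ d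
      right
      refine ⟨d, s, hs, ?_⟩
      have key : φ b = x⁻¹ * φ a := by
        field_simp
        rw [← hab]; ring
      have : (x⁻¹ * φ s) * φ a = φ d * φ a := by
        calc (x⁻¹ * φ s) * φ a = (x⁻¹ * φ a) * φ s := by ring
          _ = φ b * φ s := by rw [key]
          _ = φ (b * s) := by rw [map_mul]
          _ = φ (a * d) := by rw [h]
          _ = φ d * φ a := by rw [map_mul]; ring
      exact mul_right_cancel₀ (phi_ne_zero φ hφ ha) this

lemma aux_claim1 {R : Subring S} {T : Subring K} (φ : S →+* K)
    (f : ↥R →+* ↥T) (hf : ∀ r : ↥R, ((f r : ↥T) : K) = φ ↑r)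
    {π : S} (hπmem : ∀ s : S, π * s ∈ R)
    {t : Ideal S} (ht : t.IsPrime) (hπt : π ∉ t)
    {Q₁ : Ideal ↥T} (hQ₁ : Q₁.IsPrime) (hQ₁c : Q₁.comap f = t.comap R.subtype)
    {x : K} (hx : x ∈ T)
    (hval : MemLoc φ t x ∨ MemLoc φ t x⁻¹) : MemLoc φ t x := by
  rcases hval with h | h
  · exact h
  by_cases hx0 : x = 0
  · rw [hx0]; exact memLoc_zero φ ht
  obtain ⟨c, s, hs, hcs⟩ := h
  by_cases hct : c ∈ t
  · exfalso
    have hπs : π * s ∉ t := fun hmem => (ht.mem_or_mem hmem).elim hπt hs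
    have hπc : π * c ∈ t := t.mul_mem_left π hct
    have hid : φ (π * s) = x * φ (π * c) := by
      have h1 : φ s = x * φ c := by
        field_simp at hcs
        rw [hcs]
      rw [map_mul, map_mul, h1]; ring
    have hA : f ⟨π * c, hπmem c⟩ ∈ Q₁ := by
      have : (⟨π * c, hπmem c⟩ : ↥R) ∈ Q₁.comap f := by
        rw [hQ₁c]
        exact hπc
      exact this
    have hBA : f ⟨π * s, hπmem s⟩ = (⟨x, hx⟩ : ↥T) * f ⟨π * c, hπmem c⟩ := by
      apply Subtype.ext
      push_cast [hf]
      exact hid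
    have hB : f ⟨π * s, hπmem s⟩ ∈ Q₁ := hBA ▸ Q₁.mul_mem_left _ hA
    have : (⟨π * s, hπmem s⟩ : ↥R) ∈ t.comap R.subtype := hQ₁c ▸ hB
    exact hπs this
  · refine ⟨s, c, hct, ?_⟩
    field_simp at hcs
    rw [hcs]

lemma aux_lemB {R : Subring S} {T : Subring K} (φ : S →+* K)
    (f : ↥R →+* ↥T) (hf : ∀ r : ↥R, ((f r : ↥T) : K) = φ ↑r)
    {π : S} (hπmem : ∀ s : S, π * s ∈ R)
    {t : Ideal S} (ht : t.IsPrime) (hπt : π ∉ t)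
    {Q₁ : Ideal ↥T} (hQ₁ : Q₁.IsPrime) (hQ₁c : Q₁.comap f = t.comap R.subtype)
    {M : Ideal ↥T} (hle : Q₁ ≤ M)
    {x : K} (hx : x ∈ T) {c s : S} (hc : c ∈ t) (hs : s ∉ t) (hxs : x * φ s = φ c) :
    (⟨x, hx⟩ : ↥T) ∈ M := by
  have hπs : π * s ∉ t := fun hmem => (ht.mem_or_mem hmem).elim hπt hs
  have hπc : π * c ∈ t := t.mul_mem_left π hc
  have hid : x * φ (π * s) = φ (π * c) := by
    rw [map_mul, map_mul]
    calc x * (φ π * φ s) = φ π * (x * φ s) := by ring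
      _ = φ π * φ c := by rw [hxs]
  have hA : f ⟨π * c, hπmem c⟩ ∈ Q₁ := by
    have : (⟨π * c, hπmem c⟩ : ↥R) ∈ Q₁.comap f := by rw [hQ₁c]; exact hπc
    exact this
  have hBA : (⟨x, hx⟩ : ↥T) * f ⟨π * s, hπmem s⟩ = f ⟨π * c, hπmem c⟩ := by
    apply Subtype.ext
    push_cast [hf]
    exact hid
  have hB : f ⟨π * s, hπmem s⟩ ∉ Q₁ := by
    intro hmem
    have : (⟨π * s, hπmem s⟩ : ↥R) ∈ t.comap R.subtype := hQ₁c ▸ hmem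
    exact hπs this
  have : (⟨x, hx⟩ : ↥T) * f ⟨π * s, hπmem s⟩ ∈ Q₁ := hBA ▸ hA
  rcases hQ₁.mem_or_mem this with h | h
  · exact hle h
  · exact absurd h hB

/-- The key "finite character" argument. -/
lemma aux_inter (φ : S →+* K) (hφ : Function.Injective φ)
    (Hi : ∀ x : K, (∀ (t : Ideal S) (ht : t.IsPrime),
        Order.height (⟨t, ht⟩ : PrimeSpectrum S) = 1 → MemLoc φ t x) → ∃ r : S, φ r = x)
    (Hii : ∀ b : S, b ≠ 0 → {t : Ideal S | ∃ ht : t.IsPrime,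
        Order.height (⟨t, ht⟩ : PrimeSpectrum S) = 1 ∧ b ∈ t}.Finite)
    (Harch : ∀ (t : Ideal S) (ht : t.IsPrime),
        Order.height (⟨t, ht⟩ : PrimeSpectrum S) = 1 →
        ∀ c ∈ t, c ≠ 0 → ∀ b, b ≠ 0 → ∃ (N : ℕ) (s d : S), s ∉ t ∧ c ^ N * s = b * d)
    (P : S → Prop) (hP1 : P 1) (hPmul : ∀ a b : S, P a → P b → P (a * b)) (hP0 : ¬ P 0)
    {x : K} {a b : S} (hb : b ≠ 0) (hab : x * φ b = φ a)
    (hx : ∀ (t : Ideal S) (ht : t.IsPrime),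
        Order.height (⟨t, ht⟩ : PrimeSpectrum S) = 1 →
        (∀ s : S, P s → s ∉ t) → MemLoc φ t x) :
    ∃ a' s' : S, P s' ∧ x * φ s' = φ a' := by
  classical
  have hfin := Hii b hb
  set F : Finset (Ideal S) :=
    hfin.toFinset.filter (fun t => ¬ ∀ s : S, P s → s ∉ t) with hF
  have hFmem : ∀ t ∈ F, (∃ ht : t.IsPrime,
      Order.height (⟨t, ht⟩ : PrimeSpectrum S) = 1 ∧ b ∈ t) ∧
      ¬ ∀ s : S, P s → s ∉ t := by
    intro t htF
    rw [hF, Finset.mem_filter, Set.Finite.mem_toFinset] at htF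
    exact htF
  have hsel : ∀ t ∈ F, ∃ cc : S, P cc ∧ cc ∈ t := by
    intro t htF
    have h2 := (hFmem t htF).2
    push_neg at h2
    obtain ⟨s, hPs, hst⟩ := h2
    exact ⟨s, hPs, hst⟩
  choose! ct hct1 hct2 using hsel
  set c : S := ∏ t ∈ F, ct t with hc
  have hPc : P c := by
    rw [hc]
    refine Finset.prod_induction ct P hPmul hP1 ?_
    exact fun t htF => hct1 t htF
  have hc0 : c ≠ 0 := fun h => hP0 (h ▸ hPc)
  have hcmem : ∀ t ∈ F, c ∈ t := by
    intro t htF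
    rw [hc, ← Finset.mul_prod_erase F ct htF]
    exact Ideal.mul_mem_right _ _ (hct2 t htF)
  have harch' : ∀ t ∈ F, ∃ (N : ℕ) (s d : S), s ∉ t ∧ c ^ N * s = b * d := by
    intro t htF
    obtain ⟨ht, h1, hbt⟩ := (hFmem t htF).1
    exact Harch t ht h1 c (hcmem t htF) hc0 b hb
  choose! Nt st dt hst hstd using harch'
  set N : ℕ := F.sup Nt with hN
  have hPcN : ∀ n : ℕ, P (c ^ n) := by
    intro n
    induction n with
    | zero => simpa using hP1
    | succ n ih => rw [pow_succ]; exact hPmul _ _ ih hPc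
  have hALL : ∀ (t : Ideal S) (ht : t.IsPrime),
      Order.height (⟨t, ht⟩ : PrimeSpectrum S) = 1 → MemLoc φ t (φ (c ^ N) * x) := by
    intro t ht h1
    by_cases havoid : ∀ s : S, P s → s ∉ t
    · obtain ⟨a', s', hs', h'⟩ := hx t ht h1 havoid
      refine ⟨c ^ N * a', s', hs', ?_⟩
      rw [mul_assoc, h', ← map_mul]
    · by_cases hbt : b ∈ t
      · have htF : t ∈ F := by
          rw [hF, Finset.mem_filter, Set.Finite.mem_toFinset]
          exact ⟨⟨ht, h1, hbt⟩, havoid⟩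
        have hNt : Nt t ≤ N := Finset.le_sup htF
        have heq : c ^ (Nt t) * st t = b * dt t := hstd t htF
        refine ⟨a * dt t * c ^ (N - Nt t), st t, hst t htF, ?_⟩
        have hsplit : c ^ N = c ^ (N - Nt t) * c ^ (Nt t) := by
          rw [← pow_add, Nat.sub_add_cancel hNt]
        have hmm1 : (φ (c ^ N) * x * φ (st t)) * φ b = φ (a * dt t * c ^ (N - Nt t)) * φ b := by
          calc (φ (c ^ N) * x * φ (st t)) * φ b
              = φ (c ^ N) * φ (st t) * (x * φ b) := by ring
            _ = φ (c ^ N) * φ (st t) * φ a := by rw [hab]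
            _ = φ (c ^ N * st t * a) := by rw [map_mul, map_mul]
            _ = φ (c ^ (N - Nt t) * (c ^ (Nt t) * st t) * a) := by
                  rw [hsplit]; exact congrArg φ (by ring)
            _ = φ (c ^ (N - Nt t) * (b * dt t) * a) := by rw [heq]
            _ = φ (a * dt t * c ^ (N - Nt t)) * φ b := by
                  rw [← map_mul]; exact congrArg φ (by ring)
        exact mul_right_cancel₀ (phi_ne_zero φ hφ hb) hmm1
      · exact ⟨c ^ N * a, b, hbt, by
          calc φ (c ^ N) * x * φ b = φ (c ^ N) * (x * φ b) := by ring
            _ = φ (c ^ N) * φ a := by rw [hab]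
            _ = φ (c ^ N * a) := by rw [map_mul]⟩
  obtain ⟨r, hr⟩ := Hi (φ (c ^ N) * x) hALL
  exact ⟨r, c ^ N, hPcN N, by rw [mul_comm, hr]⟩

/-- if every height-one prime containing `w` meets `P`, then `w` divides a `P`-element. -/
lemma aux_findprime (φ : S →+* K) (hφ : Function.Injective φ)
    (Hi : ∀ x : K, (∀ (t : Ideal S) (ht : t.IsPrime),
        Order.height (⟨t, ht⟩ : PrimeSpectrum S) = 1 → MemLoc φ t x) → ∃ r : S, φ r = x)
    (Hii : ∀ b : S, b ≠ 0 → {t : Ideal S | ∃ ht : t.IsPrime,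
        Order.height (⟨t, ht⟩ : PrimeSpectrum S) = 1 ∧ b ∈ t}.Finite)
    (Harch : ∀ (t : Ideal S) (ht : t.IsPrime),
        Order.height (⟨t, ht⟩ : PrimeSpectrum S) = 1 →
        ∀ c ∈ t, c ≠ 0 → ∀ b, b ≠ 0 → ∃ (N : ℕ) (s d : S), s ∉ t ∧ c ^ N * s = b * d)
    (P : S → Prop) (hP1 : P 1) (hPmul : ∀ a b : S, P a → P b → P (a * b)) (hP0 : ¬ P 0)
    {w : S} (hw0 : w ≠ 0)
    (hno : ∀ (t : Ideal S) (ht : t.IsPrime),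
        Order.height (⟨t, ht⟩ : PrimeSpectrum S) = 1 → w ∈ t → ∃ u : S, P u ∧ u ∈ t) :
    ∃ r u : S, P u ∧ u = r * w := by
  classical
  have hfin := Hii w hw0
  set F : Finset (Ideal S) := hfin.toFinset with hF
  have hFmem : ∀ t ∈ F, ∃ ht : t.IsPrime,
      Order.height (⟨t, ht⟩ : PrimeSpectrum S) = 1 ∧ w ∈ t := by
    intro t htF
    rw [hF, Set.Finite.mem_toFinset] at htF
    exact htF
  have hsel : ∀ t ∈ F, ∃ u : S, P u ∧ u ∈ t := by
    intro t htF
    obtain ⟨ht, h1, hwt⟩ := hFmem t htF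
    exact hno t ht h1 hwt
  choose! ut hut1 hut2 using hsel
  set v : S := ∏ t ∈ F, ut t with hv
  have hPv : P v := Finset.prod_induction ut P hPmul hP1 (fun t htF => hut1 t htF)
  have hv0 : v ≠ 0 := fun h => hP0 (h ▸ hPv)
  have hvmem : ∀ t ∈ F, v ∈ t := by
    intro t htF
    rw [hv, ← Finset.mul_prod_erase F ut htF]
    exact Ideal.mul_mem_right _ _ (hut2 t htF)
  have harch' : ∀ t ∈ F, ∃ (N : ℕ) (s d : S), s ∉ t ∧ v ^ N * s = w * d := by
    intro t htF
    obtain ⟨ht, h1, hwt⟩ := hFmem t htF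
    exact Harch t ht h1 v (hvmem t htF) hv0 w hw0
  choose! Nt st dt hst hstd using harch'
  set N : ℕ := F.sup Nt with hN
  have hPvN : ∀ n : ℕ, P (v ^ n) := by
    intro n
    induction n with
    | zero => simpa using hP1
    | succ n ih => rw [pow_succ]; exact hPmul _ _ ih hPv
  have hw0' : φ w ≠ 0 := phi_ne_zero φ hφ hw0
  have hALL : ∀ (t : Ideal S) (ht : t.IsPrime),
      Order.height (⟨t, ht⟩ : PrimeSpectrum S) = 1 →
      MemLoc φ t (φ (v ^ N) * (φ w)⁻¹) := by
    intro t ht h1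
    by_cases hwt : w ∈ t
    · have htF : t ∈ F := by rw [hF, Set.Finite.mem_toFinset]; exact ⟨ht, h1, hwt⟩
      have hNt : Nt t ≤ N := Finset.le_sup htF
      have heq : v ^ (Nt t) * st t = w * dt t := hstd t htF
      refine ⟨dt t * v ^ (N - Nt t), st t, hst t htF, ?_⟩
      have hsplit : v ^ N = v ^ (N - Nt t) * v ^ (Nt t) := by
        rw [← pow_add, Nat.sub_add_cancel hNt]
      have hm : (φ (v ^ N) * (φ w)⁻¹ * φ (st t)) * φ w =
          φ (dt t * v ^ (N - Nt t)) * φ w := by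
        calc (φ (v ^ N) * (φ w)⁻¹ * φ (st t)) * φ w
            = φ (v ^ N) * ((φ w)⁻¹ * φ w) * φ (st t) := by ring
          _ = φ (v ^ N) * φ (st t) := by rw [inv_mul_cancel₀ hw0', mul_one]
          _ = φ (v ^ (N - Nt t) * (v ^ (Nt t) * st t)) := by
              rw [hsplit, map_mul, map_mul, map_mul]; ring
          _ = φ (v ^ (N - Nt t) * (w * dt t)) := by rw [heq]
          _ = φ (dt t * v ^ (N - Nt t)) * φ w := by
              rw [← map_mul]; exact congrArg φ (by ring)
      exact mul_right_cancel₀ hw0' hm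
    · refine ⟨v ^ N, w, hwt, ?_⟩
      rw [mul_assoc, inv_mul_cancel₀ hw0', mul_one]
  obtain ⟨r, hr⟩ := Hi (φ (v ^ N) * (φ w)⁻¹) hALL
  refine ⟨r, v ^ N, hPvN N, ?_⟩
  apply hφ
  rw [map_mul]
  have : φ r * φ w = (φ (v ^ N) * (φ w)⁻¹) * φ w := by rw [hr]
  rw [this, mul_assoc, inv_mul_cancel₀ hw0', mul_one]

end MyAuxiliaryHelpers

section MyPullbackMap
variable {S : Type*} [CommRing S] [IsDomain S]

/-- The embedding of `S` into `FractionRing R` for a subring `R ⊆ S` containing `πS`. -/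
noncomputable def pullbackFracMap (R : Subring S) (π : S) (hπR : π ∈ R)
    (hπmem : ∀ s : S, π * s ∈ R) (hπ0 : π ≠ 0) : S →+* FractionRing ↥R where
  toFun s := algebraMap ↥R (FractionRing ↥R) ⟨π * s, hπmem s⟩ *
      (algebraMap ↥R (FractionRing ↥R) ⟨π, hπR⟩)⁻¹
  map_one' := by
    have hd0 : algebraMap ↥R (FractionRing ↥R) ⟨π, hπR⟩ ≠ 0 := by
      rw [Ne, ← (algebraMap ↥R (FractionRing ↥R)).map_zero]
      intro h
      exact hπ0 (congrArg Subtype.val (IsFractionRing.injective ↥R (FractionRing ↥R) h))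
    have key : (⟨π * 1, hπmem 1⟩ : ↥R) = ⟨π, hπR⟩ := Subtype.ext (mul_one π)
    show algebraMap ↥R (FractionRing ↥R) ⟨π * 1, hπmem 1⟩ *
        (algebraMap ↥R (FractionRing ↥R) ⟨π, hπR⟩)⁻¹ = 1
    rw [key, mul_inv_cancel₀ hd0]
  map_mul' := by
    intro s s'
    have hd0 : algebraMap ↥R (FractionRing ↥R) ⟨π, hπR⟩ ≠ 0 := by
      rw [Ne, ← (algebraMap ↥R (FractionRing ↥R)).map_zero]
      intro h
      exact hπ0 (congrArg Subtype.val (IsFractionRing.injective ↥R (FractionRing ↥R) h))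
    have key : (⟨π * (s * s'), hπmem _⟩ : ↥R) * ⟨π, hπR⟩ = ⟨π * s, hπmem s⟩ * ⟨π * s', hπmem s'⟩ :=
      Subtype.ext (by simp only [Subring.coe_mul]; ring)
    have key2 : algebraMap ↥R (FractionRing ↥R) ⟨π * (s * s'), hπmem _⟩ *
        algebraMap ↥R (FractionRing ↥R) ⟨π, hπR⟩ =
        algebraMap ↥R (FractionRing ↥R) ⟨π * s, hπmem s⟩ *
        algebraMap ↥R (FractionRing ↥R) ⟨π * s', hπmem s'⟩ := by
      rw [← map_mul, ← map_mul, key]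
    show algebraMap ↥R (FractionRing ↥R) ⟨π * (s * s'), hπmem _⟩ *
        (algebraMap ↥R (FractionRing ↥R) ⟨π, hπR⟩)⁻¹ =
        (algebraMap ↥R (FractionRing ↥R) ⟨π * s, hπmem s⟩ *
          (algebraMap ↥R (FractionRing ↥R) ⟨π, hπR⟩)⁻¹) *
        (algebraMap ↥R (FractionRing ↥R) ⟨π * s', hπmem s'⟩ *
          (algebraMap ↥R (FractionRing ↥R) ⟨π, hπR⟩)⁻¹)
    field_simp
    convert key2 using 4 <;> ring
  map_zero' := by
    have key : (⟨π * 0, hπmem 0⟩ : ↥R) = 0 := Subtype.ext (mul_zero π)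
    show algebraMap ↥R (FractionRing ↥R) ⟨π * 0, hπmem 0⟩ *
        (algebraMap ↥R (FractionRing ↥R) ⟨π, hπR⟩)⁻¹ = 0
    rw [key, map_zero, zero_mul]
  map_add' := by
    intro s s'
    have key : (⟨π * (s + s'), hπmem _⟩ : ↥R) = ⟨π * s, hπmem s⟩ + ⟨π * s', hπmem s'⟩ :=
      Subtype.ext (by simp only [Subring.coe_add]; ring)
    show algebraMap ↥R (FractionRing ↥R) ⟨π * (s + s'), hπmem _⟩ *
        (algebraMap ↥R (FractionRing ↥R) ⟨π, hπR⟩)⁻¹ =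
        algebraMap ↥R (FractionRing ↥R) ⟨π * s, hπmem s⟩ *
          (algebraMap ↥R (FractionRing ↥R) ⟨π, hπR⟩)⁻¹ +
        algebraMap ↥R (FractionRing ↥R) ⟨π * s', hπmem s'⟩ *
          (algebraMap ↥R (FractionRing ↥R) ⟨π, hπR⟩)⁻¹
    rw [key, RingHom.map_add, add_mul]

lemma pullbackFracMap_algebraMap (R : Subring S) (π : S) (hπR : π ∈ R)
    (hπmem : ∀ s : S, π * s ∈ R) (hπ0 : π ≠ 0) (r : ↥R) :
    pullbackFracMap R π hπR hπmem hπ0 ↑r = algebraMap ↥R (FractionRing ↥R) r := by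
  have hd0 : algebraMap ↥R (FractionRing ↥R) ⟨π, hπR⟩ ≠ 0 := by
    rw [Ne, ← (algebraMap ↥R (FractionRing ↥R)).map_zero]
    intro h
    exact hπ0 (congrArg Subtype.val (IsFractionRing.injective ↥R (FractionRing ↥R) h))
  show algebraMap ↥R (FractionRing ↥R) ⟨π * ↑r, hπmem ↑r⟩ *
      (algebraMap ↥R (FractionRing ↥R) ⟨π, hπR⟩)⁻¹ = algebraMap ↥R (FractionRing ↥R) r
  have key : (⟨π * ↑r, hπmem ↑r⟩ : ↥R) = ⟨π, hπR⟩ * r := Subtype.ext (by rfl)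
  rw [key, map_mul]
  field_simp

lemma pullbackFracMap_injective (R : Subring S) (π : S) (hπR : π ∈ R)
    (hπmem : ∀ s : S, π * s ∈ R) (hπ0 : π ≠ 0) :
    Function.Injective (pullbackFracMap R π hπR hπmem hπ0) := by
  intro s s' h
  have hd0 : algebraMap ↥R (FractionRing ↥R) ⟨π, hπR⟩ ≠ 0 := by
    rw [Ne, ← (algebraMap ↥R (FractionRing ↥R)).map_zero]
    intro hh
    exact hπ0 (congrArg Subtype.val (IsFractionRing.injective ↥R (FractionRing ↥R) hh))
  have h' : algebraMap ↥R (FractionRing ↥R) ⟨π * s, hπmem s⟩ *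
      (algebraMap ↥R (FractionRing ↥R) ⟨π, hπR⟩)⁻¹ =
      algebraMap ↥R (FractionRing ↥R) ⟨π * s', hπmem s'⟩ *
      (algebraMap ↥R (FractionRing ↥R) ⟨π, hπR⟩)⁻¹ := h
  have h2 : algebraMap ↥R (FractionRing ↥R) ⟨π * s, hπmem s⟩ =
      algebraMap ↥R (FractionRing ↥R) ⟨π * s', hπmem s'⟩ :=
    mul_right_cancel₀ (inv_ne_zero hd0) h'
  have h3 : (⟨π * s, hπmem s⟩ : ↥R) = ⟨π * s', hπmem s'⟩ :=
    IsFractionRing.injective ↥R (FractionRing ↥R) h2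
  exact mul_left_cancel₀ hπ0 (congrArg Subtype.val h3)

lemma pullbackFracMap_rep (R : Subring S) (π : S) (hπR : π ∈ R)
    (hπmem : ∀ s : S, π * s ∈ R) (hπ0 : π ≠ 0) (x : FractionRing ↥R) :
    ∃ a b : S, b ≠ 0 ∧ x * pullbackFracMap R π hπR hπmem hπ0 b =
      pullbackFracMap R π hπR hπmem hπ0 a := by
  obtain ⟨a, b, hb, hx⟩ := IsFractionRing.div_surjective (A := ↥R) x
  have hb0 : (b : ↥R) ≠ 0 := nonZeroDivisors.ne_zero hb
  have hbK : algebraMap ↥R (FractionRing ↥R) b ≠ 0 := by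
    rw [Ne, ← (algebraMap ↥R (FractionRing ↥R)).map_zero]
    exact fun h => hb0 (IsFractionRing.injective ↥R (FractionRing ↥R) h)
  refine ⟨↑a, ↑b, fun h => hb0 (Subtype.ext h), ?_⟩
  rw [pullbackFracMap_algebraMap, pullbackFracMap_algebraMap, ← hx, div_mul_cancel₀ _ hbK]

end MyPullbackMap

/-- **hypersurface contraction.**  Let `S` be a generalized Krull domain of
Krull dimension `> 1` whose units together with `0` form a subfield `k`.  Let `J` be a
principal height-one prime ideal of `S` which is not maximal, and suppose every unit of `S/J`
lies in the image of `k`.  Then the pullback `R = k + J` of `k → S/J ← S` is a perinormal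
integral domain. -/
theorem perinormal_hypersurface_contraction {S : Type*} [CommRing S] [IsDomain S]
    (hS : IsGenKrull S) (hdim : 1 < ringKrullDim S)
    (k : Subring S) (hk : (k : Set S) = {s : S | IsUnit s ∨ s = 0}) (hkf : IsField k)
    (J : Ideal S) (hJ : J.IsPrime) (hJprinc : J.IsPrincipal)
    (hJht : Order.height (⟨J, hJ⟩ : PrimeSpectrum S) = 1) (hJmax : ¬ J.IsMaximal)
    (hunits : ∀ x : S ⧸ J, IsUnit x → x ∈ k.map (Ideal.Quotient.mk J))
    (R : Subring S) (hR : R = (k.map (Ideal.Quotient.mk J)).comap (Ideal.Quotient.mk J)) :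
    PerinormalDomain R := by
  classical
  obtain ⟨Hi0, Hii, Hiii⟩ := hS
  obtain ⟨π, hπgen⟩ := Submodule.IsPrincipal.principal J
  -- J is not the zero ideal
  have hJbot : J ≠ ⊥ := by
    intro h
    have hmin : IsMin (⟨J, hJ⟩ : PrimeSpectrum S) := by
      intro b hb
      show (⟨J, hJ⟩ : PrimeSpectrum S).asIdeal ≤ b.asIdeal
      simpa [h] using bot_le
    have h0 : Order.height (⟨J, hJ⟩ : PrimeSpectrum S) = 0 := Order.height_eq_zero.mpr hmin
    rw [h0] at hJht
    exact zero_ne_one hJht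
  have hπ0 : π ≠ 0 := by
    intro h
    exact hJbot (by rw [hπgen, h]; simp [Ideal.span_singleton_eq_bot])
  -- height-one primes have nothing strictly below except ⊥
  have hdim1 : ∀ (t : Ideal S) (ht : t.IsPrime),
      Order.height (⟨t, ht⟩ : PrimeSpectrum S) = 1 →
      ∀ (q : Ideal S), q.IsPrime → q < t → q = ⊥ := by
    intro t ht h1 q hq hlt
    by_contra hq0
    have hlt' : (⟨q, hq⟩ : PrimeSpectrum S) < ⟨t, ht⟩ := hlt
    have hfin : Order.height (⟨q, hq⟩ : PrimeSpectrum S) < ⊤ :=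
      lt_of_le_of_lt (Order.height_mono hlt'.le) (by rw [h1]; exact Ne.lt_top (by simp))
    have h2 := Order.height_strictMono hlt' hfin
    rw [h1] at h2
    have h3 : Order.height (⟨q, hq⟩ : PrimeSpectrum S) = 0 := ENat.lt_one_iff_eq_zero.mp h2
    have hmin := Order.height_eq_zero.mp h3
    have : (⊥ : PrimeSpectrum S) < ⟨q, hq⟩ := by
      refine lt_of_le_of_ne bot_le ?_
      intro hbe
      apply hq0
      have := congrArg PrimeSpectrum.asIdeal hbe
      exact this.symm
    exact absurd (hmin this.le) (not_le_of_gt this)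
  -- membership in R
  have hmemR : ∀ s : S, s ∈ R ↔ ∃ a ∈ k, Ideal.Quotient.mk J a = Ideal.Quotient.mk J s := by
    intro s
    rw [hR]
    simp [Subring.mem_comap, Subring.mem_map]
  have hJR : ∀ s ∈ J, s ∈ R := by
    intro s hs
    rw [hmemR]
    exact ⟨0, k.zero_mem, by rw [map_zero, eq_comm, Ideal.Quotient.eq_zero_iff_mem]; exact hs⟩
  have hπJ : π ∈ J := by rw [hπgen]; exact Ideal.mem_span_singleton_self π
  have hπR : π ∈ R := hJR π hπJ
  have hπmem : ∀ s : S, π * s ∈ R := fun s => hJR _ (Ideal.mul_mem_right s J hπJ)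
  have hkR : ∀ a ∈ k, a ∈ R := by
    intro a ha
    rw [hmemR]
    exact ⟨a, ha, rfl⟩
  -- units of S are exactly the nonzero elements of k
  have hkunit : ∀ a : S, a ∈ k → a ≠ 0 → IsUnit a := by
    intro a ha h0
    have : a ∈ (k : Set S) := ha
    rw [hk] at this
    exact this.resolve_right h0
  -- the embedding φ : S → Frac(R)
  set φ : S →+* FractionRing ↥R := pullbackFracMap R π hπR hπmem hπ0 with hφdef
  have hφinj : Function.Injective φ := pullbackFracMap_injective R π hπR hπmem hπ0
  have hφR : ∀ r : ↥R, φ ↑r = algebraMap ↥R (FractionRing ↥R) r :=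
    pullbackFracMap_algebraMap R π hπR hπmem hπ0
  have hrep : ∀ x : FractionRing ↥R, ∃ a b : S, b ≠ 0 ∧ x * φ b = φ a :=
    pullbackFracMap_rep R π hπR hπmem hπ0
  -- transporting (i) of generalized Krull
  have Hi : ∀ x : FractionRing ↥R, (∀ (t : Ideal S) (ht : t.IsPrime),
      Order.height (⟨t, ht⟩ : PrimeSpectrum S) = 1 → MemLoc φ t x) → ∃ r : S, φ r = x := by
    intro x hx
    obtain ⟨a, b, hb, hab⟩ := hrep x
    have hbS : algebraMap S (FractionRing S) b ≠ 0 := by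
      rw [Ne, ← (algebraMap S (FractionRing S)).map_zero]
      exact fun h => hb (IsFractionRing.injective S (FractionRing S) h)
    set x' : FractionRing S :=
      algebraMap S (FractionRing S) a / algebraMap S (FractionRing S) b with hx'
    have key : ∀ z w : S, x * φ w = φ z →
        x' * algebraMap S (FractionRing S) w = algebraMap S (FractionRing S) z := by
      intro z w h
      have h2 : a * w = z * b := by
        apply hφinj
        rw [map_mul, map_mul]
        calc φ a * φ w = (x * φ b) * φ w := by rw [hab]
          _ = (x * φ w) * φ b := by ring
          _ = φ z * φ b := by rw [h]
      rw [hx', div_mul_eq_mul_div, div_eq_iff hbS, ← map_mul, ← map_mul, mul_comm a w,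
        mul_comm z b]
      exact congrArg _ (by rw [mul_comm w a, h2, mul_comm z b])
    obtain ⟨r, hr⟩ := Hi0 x' (fun t ht h1 => by
      obtain ⟨z, w, hw, h⟩ := hx t ht h1
      exact ⟨z, w, hw, key z w h⟩)
    refine ⟨r, ?_⟩
    have h3 : r * b = a := by
      apply IsFractionRing.injective S (FractionRing S)
      rw [map_mul, hr, hx', div_mul_cancel₀ _ hbS]
    have h4 : φ r * φ b = x * φ b := by rw [← map_mul, h3, ← hab]
    exact mul_right_cancel₀ (phi_ne_zero φ hφinj hb) h4
  -- dvd total + archimedean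
  have Hdvd : ∀ (t : Ideal S) (ht : t.IsPrime),
      Order.height (⟨t, ht⟩ : PrimeSpectrum S) = 1 →
      ∀ z z' : S, ∃ s d : S, s ∉ t ∧ (z * s = z' * d ∨ z' * s = z * d) :=
    fun t ht h1 => aux_dvd_total t ht (Hiii t ht h1)
  have Harch : ∀ (t : Ideal S) (ht : t.IsPrime),
      Order.height (⟨t, ht⟩ : PrimeSpectrum S) = 1 →
      ∀ c ∈ t, c ≠ 0 → ∀ b : S, b ≠ 0 → ∃ (N : ℕ) (s d : S), s ∉ t ∧ c ^ N * s = b * d :=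
    fun t ht h1 c hc hc0 b hb =>
      aux_arch t ht (hdim1 t ht h1) (Hdvd t ht h1) hc hc0 hb
  have HvalK : ∀ (t : Ideal S) (ht : t.IsPrime),
      Order.height (⟨t, ht⟩ : PrimeSpectrum S) = 1 →
      ∀ x : FractionRing ↥R, MemLoc φ t x ∨ MemLoc φ t x⁻¹ :=
    fun t ht h1 => aux_valK φ hφinj t ht (Hdvd t ht h1) hrep
  -- now the main goal
  intro T hT hTloc hgd
  haveI := hTloc
  set f : ↥R →+* ↥T :=
    (algebraMap ↥R (FractionRing ↥R)).codRestrict T (fun x => hT ⟨x, rfl⟩) with hfdef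
  have hf : ∀ r : ↥R, ((f r : ↥T) : FractionRing ↥R) = φ ↑r := by
    intro r
    rw [hφR]
    rfl
  set p : Ideal ↥R := (IsLocalRing.maximalIdeal ↥T).comap f with hpdef
  have hmprime : (IsLocalRing.maximalIdeal ↥T).IsPrime :=
    (IsLocalRing.maximalIdeal.isMaximal ↥T).isPrime
  have hp : p.IsPrime := hmprime.comap f
  refine ⟨p, hp, ?_⟩
  have hcomapm : (IsLocalRing.maximalIdeal ↥T).comap f = p := hpdef.symm
  -- claim 1, packaged
  have claimT : ∀ (t : Ideal S) (ht : t.IsPrime),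
      Order.height (⟨t, ht⟩ : PrimeSpectrum S) = 1 → π ∉ t →
      t.comap R.subtype ≤ p → ∀ x ∈ T, MemLoc φ t x := by
    intro t ht h1 hπt htp x hx
    haveI := ht
    have htR : (t.comap R.subtype).IsPrime := Ideal.IsPrime.comap _
    obtain ⟨Q₁, hQ₁, hQ₁le, hQ₁c⟩ := hgd (t.comap R.subtype) p htR hp htp
      (IsLocalRing.maximalIdeal ↥T) hmprime hcomapm
    exact aux_claim1 φ f hf hπmem ht hπt hQ₁ hQ₁c hx (HvalK t ht h1 x)
  have lemBT : ∀ (t : Ideal S) (ht : t.IsPrime),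
      Order.height (⟨t, ht⟩ : PrimeSpectrum S) = 1 → π ∉ t →
      t.comap R.subtype ≤ p → ∀ (x : FractionRing ↥R) (hx : x ∈ T), ∀ c s : S,
      c ∈ t → s ∉ t → x * φ s = φ c →
      (⟨x, hx⟩ : ↥T) ∈ IsLocalRing.maximalIdeal ↥T := by
    intro t ht h1 hπt htp x hx c s hc hs hxs
    haveI := ht
    have htR : (t.comap R.subtype).IsPrime := Ideal.IsPrime.comap _
    obtain ⟨Q₁, hQ₁, hQ₁le, hQ₁c⟩ := hgd (t.comap R.subtype) p htR hp htp
      (IsLocalRing.maximalIdeal ↥T) hmprime hcomapm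
    exact aux_lemB φ f hf hπmem ht hπt hQ₁ hQ₁c hQ₁le hx hc hs hxs
  -- equality of sets
  ext x
  simp only [SetLike.mem_coe, Set.mem_setOf_eq]
  constructor
  · -- hard direction : x ∈ T → x is in the localization at p
    intro hxT
    by_cases hππ : (⟨π, hπR⟩ : ↥R) ∈ p
    · -- case p ⊇ J (the special maximal ideal)
      haveI : Nontrivial (S ⧸ J) := Ideal.Quotient.nontrivial_iff.mpr hJ.ne_top
      set U : S → Prop := fun s => IsUnit (Ideal.Quotient.mk J s) with hUdef
      have hU1 : U 1 := by rw [hUdef]; simp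
      have hUmul : ∀ a b : S, U a → U b → U (a * b) := by
        intro a b ha hb
        rw [hUdef] at *
        rw [map_mul]
        exact ha.mul hb
      have hU0 : ¬ U 0 := by
        rw [hUdef]
        simp only [map_zero]
        exact not_isUnit_zero
      have hUR : ∀ s : S, U s → s ∈ R := by
        intro s hs
        rw [hR]
        exact hunits _ hs
      have hUJ : ∀ s : S, U s → s ∉ J := by
        intro s hs hmem
        rw [hUdef, Ideal.Quotient.eq_zero_iff_mem.mpr hmem] at hs
        exact not_isUnit_zero hs
      have hsqp : ∀ j : S, j ∈ J → ∀ h : j ∈ R, (⟨j, h⟩ : ↥R) ∈ p := by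
        intro j hj hjR
        obtain ⟨c, hc⟩ := Ideal.mem_span_singleton'.mp (hπgen ▸ hj)
        have key : (⟨j, hjR⟩ : ↥R) ^ 2 =
            (⟨π, hπR⟩ : ↥R) * ⟨π * (c * c), hπmem _⟩ :=
          Subtype.ext (by push_cast; rw [← hc]; ring)
        exact hp.mem_of_pow_mem 2 (key ▸ Ideal.mul_mem_right _ p hππ)
      have hUnotp : ∀ (s : S) (hsR : s ∈ R), U s → (⟨s, hsR⟩ : ↥R) ∉ p := by
        intro s hsR hs hsp
        obtain ⟨a, hak, ha⟩ := Subring.mem_map.mp (hunits _ hs)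
        have ha0 : a ≠ 0 := by
          intro h
          rw [h, map_zero] at ha
          have hs' : IsUnit (Ideal.Quotient.mk J s) := hs
          rw [← ha] at hs'
          exact not_isUnit_zero hs'
        obtain ⟨b, hb⟩ := hkf.mul_inv_cancel
          (a := ⟨a, hak⟩) (fun h => ha0 (congrArg Subtype.val h))
        have hab1 : a * (b : S) = 1 := congrArg Subtype.val hb
        have hbR : (b : S) ∈ R := hkR _ b.2
        have hw : (⟨(b : S), hbR⟩ : ↥R) * ⟨s, hsR⟩ ∈ p := Ideal.mul_mem_left p _ hsp
        have hj' : (b : S) * s - 1 ∈ J := by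
          rw [← Ideal.Quotient.eq_zero_iff_mem, map_sub, map_mul, map_one, ← ha, ← map_mul,
            mul_comm (b : S) a, hab1, map_one, sub_self]
        have hj'p : (⟨(b : S) * s - 1, hJR _ hj'⟩ : ↥R) ∈ p := hsqp _ hj' _
        have h1p : (1 : ↥R) ∈ p := by
          have h1eq : (1 : ↥R) =
              ⟨(b : S), hbR⟩ * ⟨s, hsR⟩ - ⟨(b : S) * s - 1, hJR _ hj'⟩ :=
            Subtype.ext (by push_cast; ring)
          rw [h1eq]
          exact Ideal.sub_mem p hw hj'p
        exact hp.ne_top (Ideal.eq_top_of_isUnit_mem p h1p isUnit_one)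
      have havoidp : ∀ t : Ideal S, (∀ u : S, U u → u ∉ t) → t.comap R.subtype ≤ p := by
        intro t havoid z hz
        obtain ⟨a, hak, ha⟩ := (hmemR (z : S)).mp z.2
        by_cases ha0 : a = 0
        · have hzJ : (z : S) ∈ J := by
            rw [← Ideal.Quotient.eq_zero_iff_mem, ← ha, ha0, map_zero]
          have := hsqp _ hzJ z.2
          simpa using this
        · exfalso
          have hUz : U (z : S) := by
            show IsUnit (Ideal.Quotient.mk J (z : S))
            rw [← ha]
            exact (hkunit a hak ha0).map (Ideal.Quotient.mk J)
          exact havoid _ hUz hz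
      have hφRT : ∀ (s : S) (h : s ∈ R), φ s ∈ T := by
        intro s h
        have := hφR ⟨s, h⟩
        rw [show ((⟨s, h⟩ : ↥R) : S) = s from rfl] at this
        rw [this]
        exact hT ⟨⟨s, h⟩, rfl⟩
      have hπT : φ π ∈ T := hφRT π hπR
      have hπK : φ π ≠ 0 := phi_ne_zero φ hφinj hπ0
      have hprime_eq_J : ∀ (t : Ideal S) (ht : t.IsPrime),
          Order.height (⟨t, ht⟩ : PrimeSpectrum S) = 1 → π ∈ t → t = J := by
        intro t ht h1 hπt
        have hJle : J ≤ t := by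
          rw [hπgen, Submodule.span_le]
          simpa using hπt
        by_contra hne
        exact hJbot (hdim1 t ht h1 J hJ (lt_of_le_of_ne hJle (Ne.symm hne)))
      -- existence of n with (φ π)^n * x ∈ S_J
      have hexn : ∃ n : ℕ, MemLoc φ J ((φ π) ^ n * x) := by
        obtain ⟨a, b, hb, hab⟩ := hrep x
        obtain ⟨N, s, d, hs, hsd⟩ := Harch J hJ hJht π hπJ hπ0 b hb
        refine ⟨N, a * d, s, hs, ?_⟩
        have hbne : φ b ≠ 0 := phi_ne_zero φ hφinj hb
        have key : ((φ π) ^ N * x * φ s) * φ b = φ (a * d) * φ b := by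
          calc ((φ π) ^ N * x * φ s) * φ b = (φ π) ^ N * φ s * (x * φ b) := by ring
            _ = (φ π) ^ N * φ s * φ a := by rw [hab]
            _ = φ (π ^ N * s) * φ a := by rw [map_mul, map_pow]
            _ = φ (b * d) * φ a := by rw [hsd]
            _ = φ (a * d) * φ b := by rw [map_mul, map_mul]; ring
        exact mul_right_cancel₀ hbne key
      set n : ℕ := Nat.find hexn with hndef
      set y : FractionRing ↥R := (φ π) ^ n * x with hydef
      have hyT : y ∈ T := Subring.mul_mem T (Subring.pow_mem T hπT n) hxT
      have hyall : ∀ (t : Ideal S) (ht : t.IsPrime),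
          Order.height (⟨t, ht⟩ : PrimeSpectrum S) = 1 →
          (∀ u : S, U u → u ∉ t) → MemLoc φ t y := by
        intro t ht h1 havoid
        by_cases hπt : π ∈ t
        · rw [hprime_eq_J t ht h1 hπt]
          exact Nat.find_spec hexn
        · exact claimT t ht h1 hπt (havoidp t havoid) y hyT
      obtain ⟨a0, b0, hb0, hab0⟩ := hrep x
      have hyrep : y * φ b0 = φ (π ^ n * a0) := by
        rw [hydef, map_mul, map_pow]
        calc (φ π) ^ n * x * φ b0 = (φ π) ^ n * (x * φ b0) := by ring
          _ = (φ π) ^ n * φ a0 := by rw [hab0]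
      obtain ⟨s, u, hUu, hyu⟩ := aux_inter φ hφinj Hi Hii Harch U hU1 hUmul hU0 hb0 hyrep hyall
      have huR := hUR u hUu
      have hunotp := hUnotp u huR hUu
      have huJ := hUJ u hUu
      have hφu : φ u = algebraMap ↥R (FractionRing ↥R) ⟨u, huR⟩ := hφR ⟨u, huR⟩
      by_cases hs0 : Ideal.Quotient.mk J s = 0
      · -- s ∈ J
        have hsJ : s ∈ J := Ideal.Quotient.eq_zero_iff_mem.mp hs0
        by_cases hn : n = 0
        · -- y = x, done
          refine ⟨⟨s, hJR s hsJ⟩, ⟨u, huR⟩, hunotp, ?_⟩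
          rw [← hφu, ← hφR ⟨s, hJR s hsJ⟩]
          show x * φ u = φ s
          have hyx : y = x := by rw [hydef, hn, pow_zero, one_mul]
          rw [← hyx]
          exact hyu
        · -- contradict minimality of n
          exfalso
          obtain ⟨c, hc⟩ := Ideal.mem_span_singleton'.mp (hπgen ▸ hsJ)
          have hmin := Nat.find_min hexn (m := n - 1) (by omega)
          apply hmin
          refine ⟨c, u, huJ, ?_⟩
          have key : ((φ π) ^ (n - 1) * x * φ u) * φ π = φ c * φ π := by
            calc ((φ π) ^ (n - 1) * x * φ u) * φ π
                = ((φ π) ^ (n - 1) * φ π) * x * φ u := by ring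
              _ = (φ π) ^ n * x * φ u := by rw [← pow_succ, Nat.sub_add_cancel (by omega)]
              _ = y * φ u := by rw [hydef]
              _ = φ s := hyu
              _ = φ (c * π) := by rw [hc]
              _ = φ c * φ π := by rw [map_mul]
          exact mul_right_cancel₀ hπK key
      · by_cases hsu : IsUnit (Ideal.Quotient.mk J s)
        · have hsR := hUR s hsu
          have hsnotp := hUnotp s hsR hsu
          by_cases hn : n = 0
          · refine ⟨⟨s, hsR⟩, ⟨u, huR⟩, hunotp, ?_⟩
            rw [← hφu, ← hφR ⟨s, hsR⟩]
            show x * φ u = φ s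
            have hyx : y = x := by rw [hydef, hn, pow_zero, one_mul]
            rw [← hyx]
            exact hyu
          · exfalso
            have hsT : IsUnit (f ⟨s, hsR⟩) := by
              by_contra hnu
              exact hsnotp (by
                rwa [hpdef, Ideal.mem_comap, IsLocalRing.mem_maximalIdeal, mem_nonunits_iff])
            have hTid : (f ⟨π, hπR⟩) ^ n * ((⟨x, hxT⟩ : ↥T) * f ⟨u, huR⟩) = f ⟨s, hsR⟩ := by
              apply Subtype.ext
              push_cast [hf]
              show (φ π) ^ n * (x * φ u) = φ s
              calc (φ π) ^ n * (x * φ u) = ((φ π) ^ n * x) * φ u := by ring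
                _ = y * φ u := by rw [hydef]
                _ = φ s := hyu
            have hunit : IsUnit ((f ⟨π, hπR⟩) ^ n) :=
              isUnit_of_mul_isUnit_left (hTid ▸ hsT)
            have hππunit : IsUnit (f ⟨π, hπR⟩) :=
              isUnit_of_dvd_unit (dvd_pow_self _ hn) hunit
            have : f ⟨π, hπR⟩ ∈ IsLocalRing.maximalIdeal ↥T := hππ
            rw [IsLocalRing.mem_maximalIdeal, mem_nonunits_iff] at this
            exact this hππunit
        · -- the two-shift argument
          have hφuT : φ u ∈ T := hφRT u huR
          have hshift : ∀ (z : FractionRing ↥R) (hz : z ∈ T) (w : S),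
              Ideal.Quotient.mk J w ≠ 0 → ¬ IsUnit (Ideal.Quotient.mk J w) →
              z * φ u = φ w → (⟨z, hz⟩ : ↥T) ∈ IsLocalRing.maximalIdeal ↥T := by
            intro z hz w hw0 hwu hzw
            have hw0' : w ≠ 0 := by
              intro h
              rw [h, map_zero] at hw0
              exact hw0 rfl
            have hno : ∃ (t : Ideal S) (ht : t.IsPrime),
                Order.height (⟨t, ht⟩ : PrimeSpectrum S) = 1 ∧ w ∈ t ∧
                ∀ u' : S, U u' → u' ∉ t := by
              by_contra hcon
              push_neg at hcon
              have hsel : ∀ (t : Ideal S) (ht : t.IsPrime),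
                  Order.height (⟨t, ht⟩ : PrimeSpectrum S) = 1 → w ∈ t →
                  ∃ u' : S, U u' ∧ u' ∈ t := by
                intro t ht h1 hwt
                obtain ⟨u', hu'1, hu'2⟩ := hcon t ht h1 hwt
                exact ⟨u', hu'1, hu'2⟩
              obtain ⟨r, u', hUu', hu'eq⟩ :=
                aux_findprime φ hφinj Hi Hii Harch U hU1 hUmul hU0 hw0' hsel
              have : IsUnit (Ideal.Quotient.mk J u') := hUu'
              rw [hu'eq, map_mul] at this
              exact hwu (isUnit_of_mul_isUnit_right this)
            obtain ⟨t, ht, h1, hwt, havoid⟩ := hno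
            have hπt : π ∉ t := by
              intro hmem
              rw [hprime_eq_J t ht h1 hmem] at hwt
              exact hw0 (Ideal.Quotient.eq_zero_iff_mem.mpr hwt)
            exact lemBT t ht h1 hπt (havoidp t havoid) z hz w u hwt (havoid u hUu) hzw
          have hz0 : (⟨y, hyT⟩ : ↥T) ∈ IsLocalRing.maximalIdeal ↥T :=
            hshift y hyT s hs0 hsu hyu
          have hw1ne : Ideal.Quotient.mk J (s - u * u) ≠ 0 := by
            intro h
            rw [map_sub, sub_eq_zero, map_mul] at h
            exact hsu (h ▸ (hUu.mul hUu))
          have hw1nu : ¬ IsUnit (Ideal.Quotient.mk J (s - u * u)) := by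
            intro hun
            obtain ⟨a, hak, ha⟩ := Subring.mem_map.mp (hunits _ hun)
            obtain ⟨a', hak', ha'⟩ := Subring.mem_map.mp (hunits _ hUu)
            have hkey : Ideal.Quotient.mk J s = Ideal.Quotient.mk J (a + a' * a') := by
              have : Ideal.Quotient.mk J (s - u * u) = Ideal.Quotient.mk J a := ha.symm
              rw [map_add, map_mul, ha']
              rw [map_sub, map_mul, sub_eq_iff_eq_add] at this
              rw [this]
            by_cases h0 : a + a' * a' = 0
            · rw [hkey, h0, map_zero] at hs0
              exact hs0 rfl
            · refine hsu (hkey ▸ ?_)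
              exact (hkunit _ (k.add_mem hak (k.mul_mem hak' hak')) h0).map (Ideal.Quotient.mk J)
          have hy1T : y - φ u ∈ T := Subring.sub_mem T hyT hφuT
          have hz1 : (⟨y - φ u, hy1T⟩ : ↥T) ∈ IsLocalRing.maximalIdeal ↥T := by
            refine hshift _ hy1T (s - u * u) hw1ne hw1nu ?_
            rw [sub_mul, hyu, map_sub, map_mul]
          exfalso
          have hfu : f ⟨u, huR⟩ ∈ IsLocalRing.maximalIdeal ↥T := by
            have hdiff : f ⟨u, huR⟩ = (⟨y, hyT⟩ : ↥T) - ⟨y - φ u, hy1T⟩ := by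
              apply Subtype.ext
              push_cast [hf]
              show φ u = y - (y - φ u)
              ring
            rw [hdiff]
            exact Ideal.sub_mem _ hz0 hz1
          apply hunotp
          rw [hpdef, Ideal.mem_comap]
          exact hfu
    · -- case π ∉ p
      set q : Ideal S :=
        { carrier := {s : S | (⟨π * s, hπmem s⟩ : ↥R) ∈ p}
          add_mem' := by
            intro a b ha hb
            have key : (⟨π * (a + b), hπmem _⟩ : ↥R) =
                ⟨π * a, hπmem a⟩ + ⟨π * b, hπmem b⟩ := Subtype.ext (by push_cast; ring)
            show (⟨π * (a + b), hπmem _⟩ : ↥R) ∈ p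
            rw [key]
            exact Ideal.add_mem p ha hb
          zero_mem' := by
            have key : (⟨π * 0, hπmem 0⟩ : ↥R) = 0 := Subtype.ext (by push_cast; ring)
            show (⟨π * 0, hπmem 0⟩ : ↥R) ∈ p
            rw [key]
            exact Ideal.zero_mem p
          smul_mem' := by
            intro c s hs
            show (⟨π * (c • s), hπmem _⟩ : ↥R) ∈ p
            have key : (⟨π * (c • s), hπmem _⟩ : ↥R) ^ 2 =
                (⟨π * s, hπmem s⟩ : ↥R) * ⟨π * (c * (c * s)), hπmem _⟩ :=
              Subtype.ext (by push_cast [smul_eq_mul]; ring)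
            exact hp.mem_of_pow_mem 2 (key ▸ Ideal.mul_mem_right _ p hs) } with hqdef
      have hmemq : ∀ s : S, s ∈ q ↔ (⟨π * s, hπmem s⟩ : ↥R) ∈ p := fun s => Iff.rfl
      have hqprime : q.IsPrime := by
        constructor
        · intro htop
          have h1q : (1 : S) ∈ q := htop ▸ Submodule.mem_top
          rw [hmemq] at h1q
          have : (⟨π * 1, hπmem 1⟩ : ↥R) = ⟨π, hπR⟩ := Subtype.ext (mul_one π)
          exact hππ (this ▸ h1q)
        · intro a b hab
          rw [hmemq] at hab ⊢
          rw [hmemq (s := b)]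
          have key : (⟨π * a, hπmem a⟩ : ↥R) * ⟨π * b, hπmem b⟩ =
              (⟨π, hπR⟩ : ↥R) * ⟨π * (a * b), hπmem _⟩ := Subtype.ext (by push_cast; ring)
          have : (⟨π * a, hπmem a⟩ : ↥R) * ⟨π * b, hπmem b⟩ ∈ p := by
            rw [key]
            exact Ideal.mul_mem_left p _ hab
          exact hp.mem_or_mem this
      have hπq : π ∉ q := by
        intro h
        rw [hmemq] at h
        have key : (⟨π * π, hπmem π⟩ : ↥R) = (⟨π, hπR⟩ : ↥R) * ⟨π, hπR⟩ :=
          Subtype.ext (by push_cast; ring)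
        rw [key] at h
        exact (hp.mem_or_mem h).elim hππ hππ
      have hqR : ∀ z : ↥R, (z : S) ∈ q → z ∈ p := by
        intro z hz
        rw [hmemq] at hz
        have key : (⟨π * (z : S), hπmem _⟩ : ↥R) = (⟨π, hπR⟩ : ↥R) * z :=
          Subtype.ext (by push_cast; ring)
        rw [key] at hz
        exact (hp.mem_or_mem hz).resolve_left hππ
      obtain ⟨a, b, hb, hab⟩ := hrep x
      obtain ⟨a', s', hs', hxs'⟩ := aux_inter φ hφinj Hi Hii Harch (fun s => s ∉ q)
        ((Ideal.ne_top_iff_one q).mp hqprime.ne_top)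
        (fun u v hu hv h => (hqprime.mem_or_mem h).elim hu hv)
        (not_not_intro q.zero_mem) hb hab
        (by
          intro t ht h1 havoid
          have hle : t ≤ q := by
            intro z hz
            by_contra h
            exact havoid z h hz
          have hπt : π ∉ t := fun h => hπq (hle h)
          have htp : t.comap R.subtype ≤ p := fun z hz => hqR z (hle hz)
          exact claimT t ht h1 hπt htp x hxT)
      refine ⟨⟨π * a', hπmem a'⟩, ⟨π * s', hπmem s'⟩, hs', ?_⟩
      rw [← hφR ⟨π * a', hπmem a'⟩, ← hφR ⟨π * s', hπmem s'⟩]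
      show x * φ (π * s') = φ (π * a')
      rw [map_mul, map_mul]
      calc x * (φ π * φ s') = φ π * (x * φ s') := by ring
        _ = φ π * φ a' := by rw [hxs']
  · -- easy direction
    rintro ⟨r, s, hs, hxs⟩
    have hfs : IsUnit (f s) := by
      by_contra hnu
      exact hs (by rwa [hpdef, Ideal.mem_comap, IsLocalRing.mem_maximalIdeal, mem_nonunits_iff])
    obtain ⟨v, hv⟩ := hfs
    have hvs : ((v : ↥T) : FractionRing ↥R) = algebraMap ↥R (FractionRing ↥R) s := by
      rw [hv]; rfl
    have hvv : ((v : ↥T) : FractionRing ↥R) *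
        (((v⁻¹ : (↥T)ˣ) : ↥T) : FractionRing ↥R) = 1 := by
      have h1 : ((v : ↥T) * ((v⁻¹ : (↥T)ˣ) : ↥T) : ↥T) = 1 := by
        rw [← Units.val_mul, mul_inv_cancel, Units.val_one]
      calc ((v : ↥T) : FractionRing ↥R) * (((v⁻¹ : (↥T)ˣ) : ↥T) : FractionRing ↥R)
          = (((v : ↥T) * ((v⁻¹ : (↥T)ˣ) : ↥T) : ↥T) : FractionRing ↥R) := by push_cast; ring
        _ = 1 := by rw [h1]; rfl
    have hxval : x = ((f r * ((v⁻¹ : (↥T)ˣ) : ↥T) : ↥T) : FractionRing ↥R) := by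
      have hfr : ((f r : ↥T) : FractionRing ↥R) = algebraMap ↥R (FractionRing ↥R) r := rfl
      push_cast
      rw [hfr]
      calc x = x * (((v : ↥T) : FractionRing ↥R) *
            (((v⁻¹ : (↥T)ˣ) : ↥T) : FractionRing ↥R)) := by rw [hvv, mul_one]
        _ = (x * algebraMap ↥R (FractionRing ↥R) s) *
            (((v⁻¹ : (↥T)ˣ) : ↥T) : FractionRing ↥R) := by rw [hvs]; ring
        _ = algebraMap ↥R (FractionRing ↥R) r *
            (((v⁻¹ : (↥T)ˣ) : ↥T) : FractionRing ↥R) := by rw [hxs]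
    rw [hxval]
    exact (f r * ((v⁻¹ : (↥T)ˣ) : ↥T)).2
end

section
/- Let A be an integral domain contained in a field K. If A is perinormal in K, then K is the fraction field of A (and hence A is a perinormal domain). -/
section Helpers
variable {K : Type*} [Field K] (A : Subring K)

lemma locMap_algebraMap {B : Type*} [CommRing B] (A : Subring B) (W : Submonoid A) (a : A) :
    locMap A W (algebraMap A (Localization W) a)
      = algebraMap B (Localization (W.map A.subtype)) ↑a :=
  IsLocalization.lift_eq _ a

lemma locMap_mk' {B : Type*} [CommRing B] (A : Subring B) (W : Submonoid A) (a : A) (s : W) :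
    locMap A W (IsLocalization.mk' (Localization W) a s)
        * algebraMap B (Localization (W.map A.subtype)) ↑(s : A)
      = algebraMap B (Localization (W.map A.subtype)) ↑a := by
  rw [← locMap_algebraMap A W (s : A), ← map_mul, IsLocalization.mk'_spec,
    locMap_algebraMap]

variable (W : Submonoid A)

lemma map_le_units (hW : ∀ w ∈ W, (w : A) ≠ 0) :
    W.map A.subtype ≤ IsUnit.submonoid K := by
  rintro x ⟨w, hw, rfl⟩
  have : (A.subtype w : K) ≠ 0 := by
    simpa using fun h => hW w hw (Subtype.ext h)
  exact isUnit_iff_ne_zero.mpr this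

noncomputable def eK (hW : ∀ w ∈ W, (w : A) ≠ 0) :
    K ≃ₐ[K] Localization (W.map A.subtype) :=
  IsLocalization.atUnits K (W.map A.subtype) (map_le_units A W hW)

lemma eK_apply (hW : ∀ w ∈ W, (w : A) ≠ 0) (x : K) :
    eK A W hW x = algebraMap K (Localization (W.map A.subtype)) x := by
  have := (eK A W hW).commutes x
  simpa using this

-- elements of the prime complement are nonzero
lemma primeCompl_ne_zero (p : Ideal A) [p.IsPrime] :
    ∀ w ∈ p.primeCompl, (w : A) ≠ 0 := fun w hw h => hw (h ▸ p.zero_mem)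

set_option maxHeartbeats 1000000 in
set_option synthInstance.maxHeartbeats 400000 in
lemma part1 (h : PerinormalIn A) : IsFractionRing (↥A) K := by
  haveI h0 : (⊥ : Ideal ↥A).IsPrime := Ideal.bot_prime
  set W := (⊥ : Ideal ↥A).primeCompl with hWdef
  have hW : ∀ w ∈ W, (w : ↥A) ≠ 0 := primeCompl_ne_zero A ⊥
  have ez : ∀ x : K, eK A W hW x = algebraMap K (Localization (W.map A.subtype)) x :=
    eK_apply A W hW
  haveI : Nontrivial (Localization (W.map A.subtype)) := (eK A W hW).symm.toEquiv.nontrivial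
  haveI hloc : IsLocalRing (Localization (W.map A.subtype)) :=
    IsLocalRing.of_surjective' ((eK A W hW) : K →+* _) (eK A W hW).surjective
  haveI : Nontrivial (⊤ : Subring (Localization (W.map A.subtype))) :=
    (Subring.topEquiv (R := Localization (W.map A.subtype))).toEquiv.nontrivial
  haveI : IsLocalRing (⊤ : Subring (Localization (W.map A.subtype))) :=
    IsLocalRing.of_surjective'
      ((Subring.topEquiv (R := Localization (W.map A.subtype))).symm.toRingHom)
      (Subring.topEquiv (R := Localization (W.map A.subtype))).symm.surjective
  have hmax : IsLocalRing.maximalIdeal (Localization.AtPrime (⊥ : Ideal ↥A)) = ⊥ := by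
    rw [← Localization.AtPrime.map_eq_maximalIdeal, Ideal.map_bot]
  have hfield : IsField (Localization.AtPrime (⊥ : Ideal ↥A)) :=
    IsLocalRing.isField_iff_maximalIdeal_eq.mpr hmax
  have hunit : ∀ x : Localization.AtPrime (⊥ : Ideal ↥A), x ≠ 0 → IsUnit x := by
    intro x hx
    obtain ⟨y, hy⟩ := hfield.mul_inv_cancel hx
    exact IsUnit.of_mul_eq_one _ hy
  have hprime_bot : ∀ q : Ideal (Localization.AtPrime (⊥ : Ideal ↥A)), q.IsPrime → q = ⊥ := by
    intro q hq
    refine le_antisymm (fun x hx => ?_) bot_le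
    by_contra hxne
    exact hq.ne_top (Ideal.eq_top_of_isUnit_mem q hx (hunit x hxne))
  have htop := h ⊥ h0 ⊤ le_top inferInstance
    (by
      intro M hM
      rw [hmax]
      refine le_antisymm (fun x hx => ?_) bot_le
      by_contra hxne
      rw [Ideal.mem_comap] at hx
      exact hM.ne_top (Ideal.eq_top_of_isUnit_mem M hx
        (RingHom.isUnit_map _ (hunit x hxne))))
    (by
      intro p₁ p₂ hp₁ hp₂ hle Q₂ hQ₂ hc
      exact ⟨Q₂, hQ₂, le_rfl, by rw [hc, hprime_bot p₂ hp₂, hprime_bot p₁ hp₁]⟩)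
  -- now derive IsFractionRing
  refine ⟨?_, ?_, ?_⟩
  · rintro ⟨y, hy⟩
    have : (y : K) ≠ 0 := by
      simpa using fun hz => nonZeroDivisors.ne_zero hy (Subtype.ext hz)
    exact isUnit_iff_ne_zero.mpr this
  · intro z
    have hz : eK A W hW z ∈ (⊤ : Subring (Localization (W.map A.subtype))) := trivial
    rw [htop] at hz
    obtain ⟨x, hx⟩ := hz
    obtain ⟨⟨a, s⟩, rfl⟩ := IsLocalization.mk'_surjective W x
    refine ⟨(a, ⟨(s : ↥A), mem_nonZeroDivisors_of_ne_zero (hW s s.2)⟩), ?_⟩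
    have key := locMap_mk' A W a s
    rw [hx, ez z] at key
    have h2 : eK A W hW (z * ((s : ↥A) : K)) = eK A W hW ((a : ↥A) : K) := by
      rw [map_mul, ez z, ez, ez]
      exact key
    exact (eK A W hW).injective h2
  · intro x y hxy
    have hxy' : x = y := Subtype.ext hxy
    exact ⟨1, by rw [hxy']⟩

end Helpers

section Part2
variable {K : Type*} [Field K] (A : Subring K)

set_option maxHeartbeats 2000000 in
set_option synthInstance.maxHeartbeats 1000000 in
lemma part2 (h : PerinormalIn A) : PerinormalDomain ↥A := by
  haveI := part1 A h
  intro T hT hTloc hgd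
  haveI := hTloc
  set F := FractionRing ↥A with hF
  set g := (algebraMap ↥A F).codRestrict T (fun x => hT ⟨x, rfl⟩) with hgdef
  set p := (IsLocalRing.maximalIdeal ↥T).comap g with hpdef
  haveI hp : p.IsPrime := Ideal.IsPrime.comap g
  have hW : ∀ w ∈ p.primeCompl, (w : ↥A) ≠ 0 := primeCompl_ne_zero A p
  set L := Localization ((p.primeCompl).map A.subtype) with hL
  have ez : ∀ x : K, eK A p.primeCompl hW x = algebraMap K L x := eK_apply A p.primeCompl hW
  set j := ((FractionRing.algEquiv ↥A K).toRingEquiv.trans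
    (eK A p.primeCompl hW).toRingEquiv : F ≃+* L) with hj
  have fact1 : ∀ a : ↥A, j (algebraMap ↥A F a) = algebraMap K L ((a : K)) := by
    intro a
    have h1 : (FractionRing.algEquiv ↥A K) (algebraMap ↥A F a) = algebraMap ↥A K a :=
      (FractionRing.algEquiv ↥A K).commutes a
    rw [hj]
    simp only [RingEquiv.coe_trans, Function.comp_apply, AlgEquiv.toRingEquiv_eq_coe,
      AlgEquiv.coe_ringEquiv, h1, ez]
    rfl
  have fact2 : ∀ s : ↥A, s ∉ p → IsUnit (g s) := by
    intro s hs
    by_contra hns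
    exact hs (Ideal.mem_comap.mpr ((IsLocalRing.mem_maximalIdeal _).mpr
      (mem_nonunits_iff.mpr hns)))
  have gcoe : ∀ a : ↥A, ((g a : ↥T) : F) = algebraMap ↥A F a := fun a => rfl
  -- the image subring
  set T' := T.map j.toRingHom with hT'def
  set ψ := Subring.equivMapOfInjective T j.toRingHom j.injective with hψ
  have ψcoe : ∀ x : ↥T, ((ψ x : ↥T') : L) = j (x : F) :=
    Subring.coe_equivMapOfInjective_apply T j.toRingHom j.injective
  have hsunit : ∀ s : ↥A, s ∉ p → IsUnit (algebraMap K L ((s : K))) := by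
    intro s hs
    exact IsLocalization.map_units (M := (p.primeCompl).map A.subtype) L
      ⟨(s : K), ⟨s, hs, rfl⟩⟩
  have hrange : (locMap A p.primeCompl).range ≤ T' := by
    rintro _ ⟨x, rfl⟩
    obtain ⟨⟨a, s⟩, rfl⟩ := IsLocalization.mk'_surjective p.primeCompl x
    have hs : (s : ↥A) ∉ p := s.2
    obtain ⟨u, huu⟩ := fact2 _ hs
    set t : ↥T := g a * ↑u⁻¹ with ht
    have hmul : ((t : F)) * algebraMap ↥A F (s : ↥A) = algebraMap ↥A F a := by
      have h2 : t * g (s : ↥A) = g a := by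
        rw [ht, ← huu, Units.inv_mul_cancel_right]
      calc (t : F) * algebraMap ↥A F (s : ↥A)
          = (t : F) * ((g (s : ↥A) : ↥T) : F) := by rw [gcoe]
        _ = ((t * g (s : ↥A) : ↥T) : F) := by push_cast; ring
        _ = ((g a : ↥T) : F) := by rw [h2]
        _ = algebraMap ↥A F a := gcoe a
    have key : locMap A p.primeCompl (IsLocalization.mk' (Localization p.primeCompl) a s)
        = j (t : F) := by
      refine (hsunit (s : ↥A) hs).mul_right_cancel ?_
      rw [locMap_mk' A p.primeCompl a s]
      have : j ((t : F)) * algebraMap K L (((s : ↥A) : K)) = algebraMap K L ((a : K)) := by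
        rw [← fact1, ← map_mul, hmul, fact1]
      rw [this]
    rw [key]
    exact ⟨(t : F), t.2, rfl⟩
  haveI : Nontrivial ↥T :=
    nontrivial_of_ne (0 : ↥T) 1 (fun h01 => by simpa using congrArg Subtype.val h01)
  haveI : Nontrivial ↥T' := ψ.symm.toEquiv.nontrivial
  haveI hT'loc : IsLocalRing ↥T' := IsLocalRing.of_surjective' ψ.toRingHom ψ.surjective
  set f' := (locMap A p.primeCompl).codRestrict T' (fun x => hrange ⟨x, rfl⟩) with hf'
  have hcomp : f'.comp (algebraMap ↥A (Localization.AtPrime p)) = ψ.toRingHom.comp g := by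
    ext a
    show ((f' (algebraMap ↥A (Localization.AtPrime p) a) : ↥T') : L) = ((ψ (g a) : ↥T') : L)
    rw [ψcoe, gcoe, fact1]
    show locMap A p.primeCompl (algebraMap ↥A (Localization.AtPrime p) a) = _
    rw [locMap_algebraMap]
  have hcomap_max : ∀ M : Ideal ↥T', M.IsMaximal →
      (M.comap ψ.toRingHom).comap g = p := by
    intro M hM
    haveI := hM
    haveI : (M.comap ψ.toRingHom).IsMaximal :=
      Ideal.comap_isMaximal_of_surjective ψ.toRingHom ψ.surjective
    rw [IsLocalRing.eq_maximalIdeal this, hpdef]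
  have maxcond : ∀ M : Ideal ↥T', M.IsMaximal →
      M.comap f' = IsLocalRing.maximalIdeal (Localization.AtPrime p) := by
    intro M hM
    haveI := hM
    haveI : (M.comap f').IsPrime := Ideal.IsPrime.comap f'
    have h1 : (M.comap f').comap (algebraMap ↥A (Localization.AtPrime p)) = p := by
      rw [Ideal.comap_comap, hcomp, ← Ideal.comap_comap, hcomap_max M hM]
    calc M.comap f'
        = Ideal.map (algebraMap ↥A (Localization.AtPrime p))
            ((M.comap f').comap (algebraMap ↥A (Localization.AtPrime p))) :=
          (IsLocalization.map_comap p.primeCompl _ _).symm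
      _ = Ideal.map (algebraMap ↥A (Localization.AtPrime p)) p := by rw [h1]
      _ = IsLocalRing.maximalIdeal (Localization.AtPrime p) :=
          Localization.AtPrime.map_eq_maximalIdeal
  have gdcond : GoingDownHom f' := by
    intro p₁ p₂ hp₁ hp₂ hle Q₂ hQ₂ hc
    haveI := hQ₂
    set q₁ := p₁.comap (algebraMap ↥A (Localization.AtPrime p)) with hq₁
    set q₂ := p₂.comap (algebraMap ↥A (Localization.AtPrime p)) with hq₂
    haveI := hp₁; haveI := hp₂
    haveI hq₁p : q₁.IsPrime := Ideal.IsPrime.comap _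
    haveI hq₂p : q₂.IsPrime := Ideal.IsPrime.comap _
    set Q₂T := Q₂.comap ψ.toRingHom with hQ₂T
    haveI hQ₂Tp : Q₂T.IsPrime := Ideal.IsPrime.comap _
    have hcQ₂ : Q₂T.comap g = q₂ := by
      rw [hQ₂T, Ideal.comap_comap, ← hcomp, ← Ideal.comap_comap, hc]
    obtain ⟨Q₁T, hQ₁Tp, hle1, hc1⟩ :=
      hgd q₁ q₂ hq₁p hq₂p (Ideal.comap_mono hle) Q₂T hQ₂Tp hcQ₂
    haveI := hQ₁Tp
    set Q₁ := Q₁T.comap ψ.symm.toRingHom with hQ₁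
    haveI hQ₁p : Q₁.IsPrime := Ideal.IsPrime.comap _
    have hround : Q₁.comap ψ.toRingHom = Q₁T := by
      rw [hQ₁, Ideal.comap_comap, RingEquiv.symm_toRingHom_comp_toRingHom, Ideal.comap_id]
    refine ⟨Q₁, hQ₁p, ?_, ?_⟩
    · calc Q₁ ≤ Q₂T.comap ψ.symm.toRingHom := Ideal.comap_mono hle1
        _ = Q₂ := by
            rw [hQ₂T, Ideal.comap_comap, RingEquiv.toRingHom_comp_symm_toRingHom, Ideal.comap_id]
    · haveI : (Q₁.comap f').IsPrime := Ideal.IsPrime.comap f'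
      have h1 : (Q₁.comap f').comap (algebraMap ↥A (Localization.AtPrime p)) = q₁ := by
        rw [Ideal.comap_comap, hcomp, ← Ideal.comap_comap, hround, hc1]
      calc Q₁.comap f'
          = Ideal.map (algebraMap ↥A (Localization.AtPrime p))
              ((Q₁.comap f').comap (algebraMap ↥A (Localization.AtPrime p))) :=
            (IsLocalization.map_comap p.primeCompl _ _).symm
        _ = Ideal.map (algebraMap ↥A (Localization.AtPrime p)) q₁ := by rw [h1]
        _ = Ideal.map (algebraMap ↥A (Localization.AtPrime p))
              (p₁.comap (algebraMap ↥A (Localization.AtPrime p))) := by rw [hq₁]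
        _ = p₁ := IsLocalization.map_comap p.primeCompl _ _
  have htop : T' = (locMap A p.primeCompl).range := h p hp T' hrange hT'loc maxcond gdcond
  refine ⟨p, hp, ?_⟩
  ext x
  constructor
  · intro hx
    have hjx : j x ∈ T' := ⟨x, hx, rfl⟩
    rw [htop] at hjx
    obtain ⟨y, hy⟩ := hjx
    obtain ⟨⟨a, s⟩, rfl⟩ := IsLocalization.mk'_surjective p.primeCompl y
    have key := locMap_mk' A p.primeCompl a s
    rw [hy] at key
    have : j (x * algebraMap ↥A F (s : ↥A)) = j (algebraMap ↥A F a) := by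
      rw [map_mul, fact1, fact1]
      exact key
    exact ⟨a, (s : ↥A), s.2, j.injective this⟩
  · rintro ⟨r, s, hs, hx⟩
    obtain ⟨u, huu⟩ := fact2 s hs
    have hsne : algebraMap ↥A F s ≠ 0 := by
      intro h0
      apply hs
      have hs0 : s = 0 := IsFractionRing.injective ↥A F (by rw [h0, map_zero])
      rw [hs0]; exact p.zero_mem
    have hc : ((g r * ↑u⁻¹ : ↥T) : F) * algebraMap ↥A F s = algebraMap ↥A F r := by
      calc ((g r * ↑u⁻¹ : ↥T) : F) * algebraMap ↥A F s
          = ((g r * ↑u⁻¹ : ↥T) : F) * ((g s : ↥T) : F) := by rw [gcoe]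
        _ = ((g r * ↑u⁻¹ * g s : ↥T) : F) := by push_cast; ring
        _ = ((g r : ↥T) : F) := by rw [← huu, Units.inv_mul_cancel_right]
        _ = algebraMap ↥A F r := gcoe r
    have hxeq : x = ((g r * ↑u⁻¹ : ↥T) : F) := mul_right_cancel₀ hsne (hx.trans hc.symm)
    rw [hxeq]
    exact (g r * ↑u⁻¹ : ↥T).2

end Part2

/-- If an integral domain `A` contained in a field `K` is perinormal in `K`,
then `K` is the fraction field of `A`, and hence `A` is a perinormal domain. -/
theorem isFractionRing_of_perinormalIn_field {K : Type*} [Field K] (A : Subring K)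
    (h : PerinormalIn A) :
    IsFractionRing A K ∧ PerinormalDomain A :=
  ⟨part1 A h, part2 A h⟩
end
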